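/- (Many-Color Intersection Property) Let ε > 0 and δ > 0 be fixed and let r and ℓ be positive integers. Let (A,B) be a pair of disjoint finite sets with an edge-coloring such that for each color ν ∈ [r], the pair (A,B) is ε-regular in color ν with density d_ν = d_ν(A,B) ≥ δ. Let Y ⊆ B satisfy (δ−ε)^{ℓ−1}·|Y| > ε·|B|. Let k₁,…,k_r be positive integers with k₁+⋯+k_r = ℓ, and index vectors a ∈ A^ℓ as a = (a_{[1,1]},…,a_{[1,k₁]}, a_{[2,1]},…,a_{[r,k_r]}). Then the number of vectors a ∈ A^ℓ for which |Y ∩ ⋂_{ν=1}^{r} ⋂_{i=1}^{k_ν} N_ν(a_{[ν,i]})| < ∏_{ν=1}^{r} (d_ν − ε)^{k_ν} · |Y| is at most ℓ·ε·|A|^ℓ. -/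

import Mathlib

open Finset

attribute [local instance] Classical.propDecidable

/-- The density of the color `ν` on the pair `(X', Y')` under the edge-coloring `c`. -/
noncomputable def colDensity {V : Type*} (c : V → V → ℕ) (ν : ℕ)
    (X' Y' : Finset V) : ℝ :=
  (((X' ×ˢ Y').filter fun p => c p.1 p.2 = ν).card : ℝ) / ((X'.card : ℝ) * (Y'.card : ℝ))

/-- The pair `(X, Y)` is `ε`-regular in color `ν` under the coloring `c`. -/
def EpsRegular {V : Type*} (ε : ℝ) (c : V → V → ℕ) (ν : ℕ)
    (X Y : Finset V) : Prop :=
  ∀ X' ⊆ X, ∀ Y' ⊆ Y, ε * (X.card : ℝ) ≤ (X'.card : ℝ) →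
    ε * (Y.card : ℝ) ≤ (Y'.card : ℝ) →
    |colDensity c ν X Y - colDensity c ν X' Y'| < ε

/-- The color-`ν` neighborhood in `B` of a vertex `x`. -/
def colNbhd {V : Type*} (c : V → V → ℕ) (ν : ℕ) (B : Finset V) (x : V) : Finset V :=
  B.filter fun y => c x y = ν

lemma card_product_filter {V : Type*} [DecidableEq V] (s t : Finset V) (Q : V → V → Prop)
    [∀ x y, Decidable (Q x y)] :
    ((s ×ˢ t).filter fun p => Q p.1 p.2).card = ∑ x ∈ s, (t.filter fun y => Q x y).card := by
  rw [Finset.card_eq_sum_card_fiberwise (f := Prod.fst) (t := s)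
    (fun p hp => (Finset.mem_product.1 (Finset.mem_filter.1 hp).1).1)]
  refine Finset.sum_congr rfl fun x hx => ?_
  apply Finset.card_bij (fun p _ => p.2)
  · intro p hp
    simp only [mem_filter, mem_product] at hp ⊢
    obtain ⟨⟨⟨_, hpt⟩, hQ⟩, hfst⟩ := hp
    subst hfst
    exact ⟨hpt, hQ⟩
  · intro p hp q hq hpq
    simp only [mem_filter, mem_product] at hp hq
    exact Prod.ext (hp.2.trans hq.2.symm) hpq
  · intro y hy
    simp only [mem_filter] at hy
    exact ⟨(x, y), by simp [mem_filter, hx, hy.1, hy.2], rfl⟩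

lemma count_lemma {V : Type*} [DecidableEq V] (A : Finset V) {n : ℕ} (t : Fin n)
    (P : (Fin n → V) → Prop) [DecidablePred P] (m : ℕ)
    (h : ∀ b ∈ Fintype.piFinset (fun _ : Fin n => A),
      (A.filter fun x => P (Function.update b t x)).card ≤ m) :
    ((Fintype.piFinset fun _ : Fin n => A).filter P).card ≤ m * A.card ^ (n - 1) := by
  rcases A.eq_empty_or_nonempty with hA | ⟨v₀, hv₀⟩
  · have : (Fintype.piFinset fun _ : Fin n => A) = ∅ := by
      ext a; simp [Fintype.mem_piFinset, hA]
      exact ⟨t, by simp⟩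
    simp [this]
  · classical
    set f : (Fin n → V) → (Fin n → V) := fun a => Function.update a t v₀ with hf
    set s := (Fintype.piFinset fun _ : Fin n => A).filter P with hs
    have hfiber : ∀ b ∈ s.image f, (s.filter fun a => f a = b).card ≤ m := by
      intro b hb
      obtain ⟨a, ha, rfl⟩ := Finset.mem_image.1 hb
      have hapi : a ∈ Fintype.piFinset fun _ : Fin n => A := (Finset.mem_filter.1 ha).1
      have hbpi : f a ∈ Fintype.piFinset fun _ : Fin n => A := by
        simp only [Fintype.mem_piFinset] at hapi ⊢
        intro i
        rcases eq_or_ne i t with rfl | hi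
        · simpa [hf] using hv₀
        · simpa [hf, Function.update_of_ne hi] using hapi i
      refine le_trans (Finset.card_le_card_of_injOn (fun a' => a' t) ?_ ?_) (h (f a) hbpi)
      · intro a' ha'
        rw [Finset.mem_coe, Finset.mem_filter] at ha'
        obtain ⟨ha's, hfa'⟩ := ha'
        obtain ⟨ha'pi, hPa'⟩ := Finset.mem_filter.1 ha's
        rw [Finset.mem_coe, Finset.mem_filter]
        refine ⟨(Fintype.mem_piFinset.1 ha'pi) t, ?_⟩
        have : Function.update (f a) t (a' t) = a' := by
          rw [← hfa']
          simp [hf, Function.update_idem]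
        rwa [this]
      · intro a1 h1 a2 h2 h12
        rw [Finset.mem_coe, Finset.mem_filter] at h1 h2
        funext i
        rcases eq_or_ne i t with rfl | hi
        · exact h12
        · have e1 := congrFun (h1.2.trans h2.2.symm) i
          simpa [hf, Function.update_of_ne hi] using e1
    have himg : (s.image f).card ≤ A.card ^ (n - 1) := by
      have hsub : s.image f ⊆ Fintype.piFinset (fun i : Fin n => if i = t then {v₀} else A) := by
        intro b hb
        obtain ⟨a, ha, rfl⟩ := Finset.mem_image.1 hb
        have hapi := (Finset.mem_filter.1 ha).1
        simp only [Fintype.mem_piFinset] at hapi ⊢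
        intro i
        rcases eq_or_ne i t with rfl | hi
        · simp [hf]
        · simpa [hf, Function.update_of_ne hi, hi] using hapi i
      refine le_trans (Finset.card_le_card hsub) ?_
      rw [Fintype.card_piFinset]
      rw [← Finset.mul_prod_erase univ _ (Finset.mem_univ t)]
      have ht1 : (if t = t then ({v₀} : Finset V) else A) = {v₀} := if_pos rfl
      rw [ht1, Finset.card_singleton, one_mul]
      have : ∀ i ∈ univ.erase t, ((if i = t then ({v₀} : Finset V) else A)).card = A.card := by
        intro i hi
        rw [if_neg (Finset.mem_erase.1 hi).1]
      rw [Finset.prod_congr rfl this, Finset.prod_const, Finset.card_erase_of_mem (mem_univ t),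
        Finset.card_univ, Fintype.card_fin]
    calc s.card ≤ m * (s.image f).card := Finset.card_le_mul_card_image s m hfiber
      _ ≤ m * A.card ^ (n - 1) := Nat.mul_le_mul_left m himg

lemma step_lemma {V : Type*} [DecidableEq V] {ε : ℝ} (hε : 0 < ε) {c : V → V → ℕ} {ν : ℕ}
    {A B : Finset V} (hA0 : (0:ℝ) < A.card) (hreg : EpsRegular ε c ν A B)
    {Y' : Finset V} (hY'B : Y' ⊆ B) (hY' : ε * (B.card : ℝ) ≤ (Y'.card : ℝ))
    (hY'0 : (0:ℝ) < Y'.card) :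
    ((A.filter fun x => ((Y'.filter fun y => c x y = ν).card : ℝ) <
      (colDensity c ν A B - ε) * (Y'.card : ℝ)).card : ℝ) < ε * A.card := by
  by_contra hcon
  push_neg at hcon
  set Bad := A.filter fun x => ((Y'.filter fun y => c x y = ν).card : ℝ) <
      (colDensity c ν A B - ε) * (Y'.card : ℝ) with hBad
  have hBad0 : (0:ℝ) < Bad.card := lt_of_lt_of_le (by positivity) hcon
  have hBadne : Bad.Nonempty := Finset.card_pos.1 (by exact_mod_cast hBad0)
  have hE : (((Bad ×ˢ Y').filter fun p => c p.1 p.2 = ν).card : ℝ) <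
      (Bad.card : ℝ) * ((colDensity c ν A B - ε) * (Y'.card : ℝ)) := by
    rw [card_product_filter Bad Y' (fun x y => c x y = ν)]
    push_cast
    calc (∑ x ∈ Bad, ((Y'.filter fun y => c x y = ν).card : ℝ))
        < ∑ _x ∈ Bad, (colDensity c ν A B - ε) * (Y'.card : ℝ) := by
          apply Finset.sum_lt_sum_of_nonempty hBadne
          intro x hx
          exact (Finset.mem_filter.1 hx).2
      _ = (Bad.card : ℝ) * ((colDensity c ν A B - ε) * (Y'.card : ℝ)) := by
          rw [Finset.sum_const, nsmul_eq_mul]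
  have hd' : colDensity c ν Bad Y' < colDensity c ν A B - ε := by
    rw [colDensity, div_lt_iff₀ (by positivity)]
    calc (((Bad ×ˢ Y').filter fun p => c p.1 p.2 = ν).card : ℝ)
        < (Bad.card : ℝ) * ((colDensity c ν A B - ε) * (Y'.card : ℝ)) := hE
      _ = (colDensity c ν A B - ε) * ((Bad.card : ℝ) * (Y'.card : ℝ)) := by ring
  have habs := hreg Bad (Finset.filter_subset _ _) Y' hY'B hcon hY'
  rw [abs_lt] at habs
  linarith [habs.2]

set_option maxHeartbeats 2000000 in
theorem many_color_intersection_property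
    (ε δ : ℝ) (hε : 0 < ε) (hδ : 0 < δ) (r ℓ : ℕ) (hr : 0 < r) (hℓ : 0 < ℓ)
    {V : Type*} [DecidableEq V] (A B : Finset V) (hAB : Disjoint A B)
    (c : V → V → ℕ)
    (hreg : ∀ ν ∈ Finset.Icc 1 r, EpsRegular ε c ν A B)
    (hdens : ∀ ν ∈ Finset.Icc 1 r, δ ≤ colDensity c ν A B)
    (Y : Finset V) (hYB : Y ⊆ B)
    (hYsize : ε * (B.card : ℝ) < (δ - ε) ^ (ℓ - 1) * (Y.card : ℝ))
    (k : ℕ → ℕ) (hk : ∀ ν ∈ Finset.Icc 1 r, 0 < k ν)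
    (hsum : ∑ ν ∈ Finset.Icc 1 r, k ν = ℓ)
    (col : Fin ℓ → ℕ)
    (hcol : ∀ ν ∈ Finset.Icc 1 r, (univ.filter fun t => col t = ν).card = k ν) :
    (((Fintype.piFinset fun _ : Fin ℓ => A).filter fun a =>
        ((Y.filter fun y => ∀ t : Fin ℓ, y ∈ colNbhd c (col t) B (a t)).card : ℝ) <
          (∏ ν ∈ Finset.Icc 1 r, (colDensity c ν A B - ε) ^ k ν) * (Y.card : ℝ)).card : ℝ)
      ≤ (ℓ : ℝ) * ε * (A.card : ℝ) ^ ℓ := by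
  classical
  have hpic : (Fintype.piFinset fun _ : Fin ℓ => A).card = A.card ^ ℓ := by
    rw [Fintype.card_piFinset, Finset.prod_const, Finset.card_univ, Fintype.card_fin]
  -- trivial case : 1 ≤ ℓ ε
  rcases le_or_gt 1 ((ℓ:ℝ) * ε) with htriv | hsmall
  · calc (((Fintype.piFinset fun _ : Fin ℓ => A).filter _).card : ℝ)
        ≤ ((Fintype.piFinset fun _ : Fin ℓ => A).card : ℝ) := by
          exact_mod_cast Finset.card_filter_le _ _
      _ = ((A.card : ℝ)) ^ ℓ := by rw [hpic]; push_cast; ring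
      _ ≤ (ℓ:ℝ) * ε * (A.card : ℝ) ^ ℓ := le_mul_of_one_le_left (by positivity) htriv
  -- Y empty case
  rcases Y.eq_empty_or_nonempty with hYe | hYne
  · subst hYe
    have hemp : ((Fintype.piFinset fun _ : Fin ℓ => A).filter fun a =>
        (((∅:Finset V).filter fun y => ∀ t : Fin ℓ, y ∈ colNbhd c (col t) B (a t)).card : ℝ) <
          (∏ ν ∈ Finset.Icc 1 r, (colDensity c ν A B - ε) ^ k ν) * (((∅:Finset V)).card : ℝ)) = ∅ := by
      apply Finset.filter_false_of_mem
      intro a _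
      simp
    rw [hemp]
    simp only [Finset.card_empty, Nat.cast_zero]
    positivity
  have hY0 : (0:ℝ) < Y.card := by exact_mod_cast Finset.card_pos.2 hYne
  have hB0 : (0:ℝ) < B.card := by
    exact_mod_cast Finset.card_pos.2 (hYne.mono hYB)
  -- A empty case
  rcases A.eq_empty_or_nonempty with hAe | hAne
  · subst hAe
    have hemp : (Fintype.piFinset fun _ : Fin ℓ => (∅ : Finset V)) = ∅ := by
      ext a
      simp only [Fintype.mem_piFinset, Finset.notMem_empty, Finset.mem_filter]
      simp
      exact ⟨0, hℓ⟩
    rw [hemp]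
    simp only [Finset.filter_empty, Finset.card_empty, Nat.cast_zero]
    positivity
  have hA0 : (0:ℝ) < A.card := by exact_mod_cast Finset.card_pos.2 hAne
  have hε1 : ε < 1 := by
    have h1 : (1:ℝ) ≤ (ℓ:ℝ) := by exact_mod_cast hℓ
    nlinarith
  have h1r : 1 ∈ Finset.Icc 1 r := by
    rw [Finset.mem_Icc]; omega
  have hd1 : ∀ ν ∈ Finset.Icc 1 r, colDensity c ν A B ≤ 1 := by
    intro ν hν
    rw [colDensity, div_le_one (by positivity)]
    calc ((((A ×ˢ B).filter fun p => c p.1 p.2 = ν).card : ℝ))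
        ≤ ((A ×ˢ B).card : ℝ) := by exact_mod_cast Finset.card_filter_le _ _
      _ = (A.card : ℝ) * B.card := by rw [Finset.card_product]; push_cast; ring
  have hδ1 : δ ≤ 1 := le_trans (hdens 1 h1r) (hd1 1 h1r)
  have hδε2 : 2 ≤ ℓ → ε < δ := by
    intro h2
    by_contra hle
    push_neg at hle
    have hp : (δ-ε)^(ℓ-1) ≤ ε - δ := by
      calc (δ-ε)^(ℓ-1) ≤ |(δ-ε)^(ℓ-1)| := le_abs_self _
        _ = |δ-ε|^(ℓ-1) := by rw [abs_pow]
        _ = (ε-δ)^(ℓ-1) := by rw [abs_of_nonpos (by linarith), neg_sub]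
        _ ≤ ε-δ := pow_le_of_le_one (by linarith) (by linarith) (by omega)
    have hYle : (Y.card:ℝ) ≤ B.card := by exact_mod_cast Finset.card_le_card hYB
    have h3 : (δ-ε)^(ℓ-1) * Y.card ≤ (ε - δ) * Y.card :=
      mul_le_mul_of_nonneg_right hp hY0.le
    have h4 : (ε - δ) * Y.card ≤ (ε - δ) * B.card :=
      mul_le_mul_of_nonneg_left hYle (by linarith)
    nlinarith
  have hcolmem : ∀ t : Fin ℓ, col t ∈ Finset.Icc 1 r := by
    have hunion : (Finset.Icc 1 r).biUnion (fun ν => univ.filter fun t => col t = ν) = univ := by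
      apply Finset.eq_of_subset_of_card_le (Finset.subset_univ _)
      rw [Finset.card_biUnion]
      · rw [Finset.sum_congr rfl hcol, hsum, Finset.card_univ, Fintype.card_fin]
      · intro ν1 _ ν2 _ hne
        rw [Function.onFun, Finset.disjoint_left]
        intro t ht1 ht2
        exact hne (((Finset.mem_filter.1 ht1).2.symm).trans (Finset.mem_filter.1 ht2).2)
    intro t
    obtain ⟨ν, hν, ht⟩ := Finset.mem_biUnion.1 (hunion ▸ Finset.mem_univ t)
    rw [(Finset.mem_filter.1 ht).2]
    exact hν
  -- the nested intersection sets
  set Yt : ℕ → (Fin ℓ → V) → Finset V :=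
    fun m a => Y.filter fun y => ∀ s : Fin ℓ, (s:ℕ) < m → c (a s) y = col s with hYtdef
  set MX : Fin ℓ → ℝ := fun s => max 0 (colDensity c (col s) A B - ε) with hMXdef
  set goodstep : Fin ℓ → (Fin ℓ → V) → Prop :=
    fun s a => MX s * ((Yt (s:ℕ) a).card : ℝ) ≤ ((Yt ((s:ℕ)+1) a).card : ℝ) with hgooddef
  have hYt0 : ∀ a, Yt 0 a = Y := by
    intro a
    rw [hYtdef]
    apply Finset.filter_true_of_mem
    intro y _ s hs
    exact absurd hs (Nat.not_lt_zero _)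
  have hYtB : ∀ (m : ℕ) (a), Yt m a ⊆ B := fun m a => le_trans (Finset.filter_subset _ _) hYB
  have hYtdep : ∀ (m : ℕ) (a b : Fin ℓ → V), (∀ s : Fin ℓ, (s:ℕ) < m → a s = b s) →
      Yt m a = Yt m b := by
    intro m a b hab
    rw [hYtdef]
    apply Finset.filter_congr
    intro y _
    constructor
    · intro h s hs; rw [← hab s hs]; exact h s hs
    · intro h s hs; rw [hab s hs]; exact h s hs
  have hYtsucc : ∀ (m : ℕ) (hm : m < ℓ) (a : Fin ℓ → V),
      Yt (m+1) a = (Yt m a).filter fun y => c (a ⟨m, hm⟩) y = col ⟨m, hm⟩ := by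
    intro m hm a
    rw [hYtdef, Finset.filter_filter]
    apply Finset.filter_congr
    intro y _
    constructor
    · intro h
      exact ⟨fun s hs => h s (Nat.lt_succ_of_lt hs), h ⟨m, hm⟩ (Nat.lt_succ_self m)⟩
    · rintro ⟨h1, h2⟩ s hs
      rcases Nat.lt_succ_iff_lt_or_eq.1 hs with h | h
      · exact h1 s h
      · have : s = ⟨m, hm⟩ := Fin.ext h
        rw [this]; exact h2
  -- the chain lemma
  have chain : ∀ (a : Fin ℓ → V) (m : ℕ), m ≤ ℓ →
      (∀ s : Fin ℓ, (s:ℕ) < m → goodstep s a) →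
      (∏ s ∈ univ.filter fun s : Fin ℓ => (s:ℕ) < m, MX s) * (Y.card:ℝ) ≤ ((Yt m a).card : ℝ) := by
    intro a m
    induction m with
    | zero =>
      intro _ _
      rw [hYt0 a]
      have he : (univ.filter fun s : Fin ℓ => (s:ℕ) < 0) = ∅ := by
        apply Finset.filter_false_of_mem
        intro s _
        exact Nat.not_lt_zero _
      rw [he, Finset.prod_empty, one_mul]
    | succ m ih =>
      intro hm1 hgood
      have hm : m < ℓ := hm1
      have hfs : (univ.filter fun s : Fin ℓ => (s:ℕ) < m+1) =
          insert ⟨m, hm⟩ (univ.filter fun s : Fin ℓ => (s:ℕ) < m) := by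
        ext s
        simp only [Finset.mem_insert, Finset.mem_filter, Finset.mem_univ, true_and]
        constructor
        · intro h
          rcases Nat.lt_succ_iff_lt_or_eq.1 h with h | h
          · exact Or.inr h
          · exact Or.inl (Fin.ext h)
        · rintro (rfl | h)
          · exact Nat.lt_succ_self m
          · exact Nat.lt_succ_of_lt h
      have hnot : (⟨m, hm⟩ : Fin ℓ) ∉ univ.filter fun s : Fin ℓ => (s:ℕ) < m := by simp
      rw [hfs, Finset.prod_insert hnot]
      have hIH := ih (le_of_lt hm1) (fun s hs => hgood s (Nat.lt_succ_of_lt hs))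
      have hMXnn : (0:ℝ) ≤ MX ⟨m, hm⟩ := le_max_left _ _
      have hg : MX ⟨m, hm⟩ * ((Yt m a).card : ℝ) ≤ ((Yt (m+1) a).card : ℝ) :=
        hgood ⟨m, hm⟩ (Nat.lt_succ_self m)
      calc MX ⟨m, hm⟩ * (∏ s ∈ univ.filter fun s : Fin ℓ => (s:ℕ) < m, MX s) * (Y.card:ℝ)
          = MX ⟨m, hm⟩ * ((∏ s ∈ univ.filter fun s : Fin ℓ => (s:ℕ) < m, MX s) * (Y.card:ℝ)) := by
            ring
        _ ≤ MX ⟨m, hm⟩ * ((Yt m a).card : ℝ) := mul_le_mul_of_nonneg_left hIH hMXnn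
        _ ≤ ((Yt (m+1) a).card : ℝ) := hg
  -- lower bound of partial products
  have hprod_lb : ∀ t : Fin ℓ,
      (δ - ε)^(ℓ-1) ≤ ∏ s ∈ univ.filter fun s : Fin ℓ => (s:ℕ) < (t:ℕ), MX s := by
    intro t
    by_cases h2 : 2 ≤ ℓ
    · have hεδ := hδε2 h2
      have hsubE : (univ.filter fun s : Fin ℓ => (s:ℕ) < (t:ℕ)) ⊆ univ.erase t := by
        intro s hs
        rw [Finset.mem_erase]
        have hlt := (Finset.mem_filter.1 hs).2
        refine ⟨fun heq => ?_, Finset.mem_univ s⟩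
        rw [heq] at hlt
        exact lt_irrefl _ hlt
      have hcard : (univ.filter fun s : Fin ℓ => (s:ℕ) < (t:ℕ)).card ≤ ℓ - 1 := by
        calc (univ.filter fun s : Fin ℓ => (s:ℕ) < (t:ℕ)).card
            ≤ (univ.erase t).card := Finset.card_le_card hsubE
          _ = ℓ - 1 := by
            rw [Finset.card_erase_of_mem (Finset.mem_univ t), Finset.card_univ, Fintype.card_fin]
      calc (δ-ε)^(ℓ-1) ≤ (δ-ε)^((univ.filter fun s : Fin ℓ => (s:ℕ) < (t:ℕ)).card) :=
            pow_le_pow_of_le_one (by linarith) (by linarith) hcard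
        _ = ∏ _s ∈ univ.filter fun s : Fin ℓ => (s:ℕ) < (t:ℕ), (δ-ε) := (Finset.prod_const _).symm
        _ ≤ ∏ s ∈ univ.filter fun s : Fin ℓ => (s:ℕ) < (t:ℕ), MX s := by
            apply Finset.prod_le_prod (fun _ _ => by linarith)
            intro s _
            have hds := hdens (col s) (hcolmem s)
            exact le_trans (by linarith) (le_max_right 0 (colDensity c (col s) A B - ε))
    · have hl1 : ℓ = 1 := by omega
      have ht0 : (t:ℕ) = 0 := by omega
      have he : (univ.filter fun s : Fin ℓ => (s:ℕ) < (t:ℕ)) = ∅ := by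
        apply Finset.filter_false_of_mem
        intro s _
        rw [ht0]
        exact Nat.not_lt_zero _
      rw [he, Finset.prod_empty, hl1]
      norm_num
  -- full product identity
  have prodMX : (∏ s : Fin ℓ, MX s) =
      ∏ ν ∈ Finset.Icc 1 r, (max 0 (colDensity c ν A B - ε))^(k ν) := by
    rw [← Finset.prod_fiberwise_of_maps_to (fun t _ => hcolmem t) MX]
    apply Finset.prod_congr rfl
    intro ν hν
    have hcongr : ∀ s ∈ univ.filter fun s : Fin ℓ => col s = ν,
        MX s = max 0 (colDensity c ν A B - ε) := by
      intro s hs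
      rw [hMXdef]
      simp only
      rw [(Finset.mem_filter.1 hs).2]
    rw [Finset.prod_congr rfl hcongr, Finset.prod_const, hcol ν hν]
  -- comparison of products
  have hcmp : (∏ ν ∈ Finset.Icc 1 r, (colDensity c ν A B - ε)^(k ν)) ≤
      ∏ ν ∈ Finset.Icc 1 r, (max 0 (colDensity c ν A B - ε))^(k ν) := by
    by_cases h2 : 2 ≤ ℓ
    · apply le_of_eq
      apply Finset.prod_congr rfl
      intro ν hν
      have h1 := hdens ν hν
      have h2' := hδε2 h2
      rw [max_eq_right (by linarith)]
    · have hl1 : ℓ = 1 := by omega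
      have hr1 : r = 1 := by
        have h1 : (Finset.Icc 1 r).card • 1 ≤ ∑ ν ∈ Finset.Icc 1 r, k ν :=
          Finset.card_nsmul_le_sum _ _ 1 (fun ν hν => hk ν hν)
        rw [hsum, hl1, Nat.card_Icc] at h1
        simp at h1
        omega
      subst hr1
      rw [Finset.Icc_self, Finset.prod_singleton, Finset.prod_singleton]
      have hk1 : k 1 = 1 := by
        have := hsum
        rw [Finset.Icc_self, Finset.sum_singleton] at this
        omega
      rw [hk1, pow_one, pow_one]
      exact le_max_right _ _
  -- statement filter equals Yt ℓ
  have hfilterY : ∀ a : Fin ℓ → V,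
      (Y.filter fun y => ∀ t : Fin ℓ, y ∈ colNbhd c (col t) B (a t)) = Yt ℓ a := by
    intro a
    rw [hYtdef]
    apply Finset.filter_congr
    intro y hy
    simp only [colNbhd, Finset.mem_filter]
    constructor
    · intro h s _
      exact (h s).2
    · intro h t
      exact ⟨hYB hy, h t t.isLt⟩
  -- Fail predicates
  set Fail : Fin ℓ → (Fin ℓ → V) → Prop :=
    fun t a => (∀ s : Fin ℓ, s < t → goodstep s a) ∧ ¬ goodstep t a with hFaildef
  have hsubset : ((Fintype.piFinset fun _ : Fin ℓ => A).filter fun a =>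
        ((Y.filter fun y => ∀ t : Fin ℓ, y ∈ colNbhd c (col t) B (a t)).card : ℝ) <
          (∏ ν ∈ Finset.Icc 1 r, (colDensity c ν A B - ε) ^ k ν) * (Y.card : ℝ)) ⊆
      univ.biUnion fun t : Fin ℓ => (Fintype.piFinset fun _ : Fin ℓ => A).filter (Fail t) := by
    intro a ha
    obtain ⟨hapi, haP⟩ := Finset.mem_filter.1 ha
    by_contra hno
    have hnofail : ∀ t : Fin ℓ, ¬ Fail t a := by
      intro t hF
      exact hno (Finset.mem_biUnion.2 ⟨t, Finset.mem_univ t, Finset.mem_filter.2 ⟨hapi, hF⟩⟩)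
    have hall : ∀ t : Fin ℓ, goodstep t a := by
      by_contra hng
      push_neg at hng
      obtain ⟨t0, ht0⟩ := hng
      have hSne : (univ.filter fun t : Fin ℓ => ¬ goodstep t a).Nonempty :=
        ⟨t0, Finset.mem_filter.2 ⟨Finset.mem_univ _, ht0⟩⟩
      apply hnofail ((univ.filter fun t : Fin ℓ => ¬ goodstep t a).min' hSne)
      constructor
      · intro s hs
        by_contra hgs
        have hmem : s ∈ univ.filter fun t : Fin ℓ => ¬ goodstep t a :=
          Finset.mem_filter.2 ⟨Finset.mem_univ s, hgs⟩
        have hle := Finset.min'_le _ s hmem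
        exact absurd hs (not_lt.2 hle)
      · exact (Finset.mem_filter.1 (Finset.min'_mem _ hSne)).2
    have hchain := chain a ℓ le_rfl (fun s _ => hall s)
    have hunivf : (univ.filter fun s : Fin ℓ => (s:ℕ) < ℓ) = univ := by
      apply Finset.filter_true_of_mem
      intro s _
      exact s.isLt
    rw [hunivf, prodMX] at hchain
    rw [hfilterY a] at haP
    have hfin : (∏ ν ∈ Finset.Icc 1 r, (colDensity c ν A B - ε)^(k ν)) * (Y.card:ℝ) ≤
        ((Yt ℓ a).card:ℝ) :=
      le_trans (mul_le_mul_of_nonneg_right hcmp hY0.le) hchain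
    linarith
  -- bounding each Fail set
  have hfail : ∀ t : Fin ℓ,
      ((Fintype.piFinset fun _ : Fin ℓ => A).filter (Fail t)).card ≤
        (⌊ε * A.card⌋₊) * A.card^(ℓ-1) := by
    intro t
    apply count_lemma A t (Fail t)
    intro b _
    have hYtup : ∀ (x : V) (m : ℕ), m ≤ (t:ℕ) →
        Yt m (Function.update b t x) = Yt m b := by
      intro x m hmt
      apply hYtdep
      intro s hs
      apply Function.update_of_ne
      intro heq
      rw [heq] at hs
      omega
    have hgs_iff : ∀ (x : V) (s : Fin ℓ), s < t →
        (goodstep s (Function.update b t x) ↔ goodstep s b) := by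
      intro x s hst
      have hst' : (s:ℕ) < (t:ℕ) := hst
      have h1 := hYtup x (s:ℕ) (le_of_lt hst')
      have h2 := hYtup x ((s:ℕ)+1) hst'
      rw [hgooddef]
      simp only
      rw [h1, h2]
    by_cases hPg : ∀ s : Fin ℓ, s < t → goodstep s b
    · by_cases hMXpos : 0 < colDensity c (col t) A B - ε
      · have hchainb := chain b (t:ℕ) (le_of_lt t.isLt) (fun s hs => hPg s hs)
        have hYt_lb : ε * (B.card:ℝ) < ((Yt (t:ℕ) b).card : ℝ) := by
          calc ε * (B.card:ℝ) < (δ-ε)^(ℓ-1) * (Y.card:ℝ) := hYsize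
            _ ≤ (∏ s ∈ univ.filter fun s : Fin ℓ => (s:ℕ) < (t:ℕ), MX s) * (Y.card:ℝ) :=
                mul_le_mul_of_nonneg_right (hprod_lb t) hY0.le
            _ ≤ ((Yt (t:ℕ) b).card : ℝ) := hchainb
        have hY'0 : (0:ℝ) < ((Yt (t:ℕ) b).card : ℝ) :=
          lt_trans (by positivity) hYt_lb
        have hstep := step_lemma hε hA0 (hreg (col t) (hcolmem t)) (hYtB (t:ℕ) b)
          hYt_lb.le hY'0
        have hsub2 : (A.filter fun x => Fail t (Function.update b t x)) ⊆
            (A.filter fun x => (((Yt (t:ℕ) b).filter fun y => c x y = col t).card : ℝ) <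
              (colDensity c (col t) A B - ε) * ((Yt (t:ℕ) b).card:ℝ)) := by
          intro x hx
          obtain ⟨hxA, hxF⟩ := Finset.mem_filter.1 hx
          have hxbad := hxF.2
          rw [Finset.mem_filter]
          refine ⟨hxA, ?_⟩
          have hEq : Yt ((t:ℕ)+1) (Function.update b t x) =
              (Yt (t:ℕ) b).filter fun y => c x y = col t := by
            rw [hYtsucc (t:ℕ) t.isLt (Function.update b t x)]
            rw [hYtup x (t:ℕ) le_rfl]
            have hEta : (⟨(t:ℕ), t.isLt⟩ : Fin ℓ) = t := by
              apply Fin.ext; rfl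
            rw [hEta, Function.update_self]
          rw [hgooddef] at hxbad
          simp only at hxbad
          rw [hYtup x (t:ℕ) le_rfl, hEq] at hxbad
          push_neg at hxbad
          rw [hMXdef] at hxbad
          simp only at hxbad
          rwa [max_eq_right hMXpos.le] at hxbad
        have hle : ((A.filter fun x => Fail t (Function.update b t x)).card : ℝ) < ε * A.card :=
          lt_of_le_of_lt (by exact_mod_cast Finset.card_le_card hsub2) hstep
        exact Nat.le_floor hle.le
      · have hemp : (A.filter fun x => Fail t (Function.update b t x)) = ∅ := by
          apply Finset.filter_false_of_mem
          intro x _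
          rintro ⟨_, hbad⟩
          apply hbad
          rw [hgooddef]
          simp only
          rw [hMXdef]
          simp only
          rw [max_eq_left (by linarith)]
          rw [zero_mul]
          exact Nat.cast_nonneg _
        rw [hemp, Finset.card_empty]
        exact Nat.zero_le _
    · have hemp : (A.filter fun x => Fail t (Function.update b t x)) = ∅ := by
        apply Finset.filter_false_of_mem
        intro x _
        rintro ⟨hpre, _⟩
        apply hPg
        intro s hs
        exact (hgs_iff x s hs).1 (hpre s hs)
      rw [hemp, Finset.card_empty]
      exact Nat.zero_le _
  -- put it together
  have hbiU : ((univ.biUnion fun t : Fin ℓ =>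
      (Fintype.piFinset fun _ : Fin ℓ => A).filter (Fail t)).card : ℝ) ≤
      (ℓ:ℝ) * ((⌊ε * A.card⌋₊ : ℝ) * (A.card:ℝ)^(ℓ-1)) := by
    calc ((univ.biUnion fun t : Fin ℓ =>
        (Fintype.piFinset fun _ : Fin ℓ => A).filter (Fail t)).card : ℝ)
        ≤ ∑ t : Fin ℓ, (((Fintype.piFinset fun _ : Fin ℓ => A).filter (Fail t)).card : ℝ) := by
          exact_mod_cast Finset.card_biUnion_le
      _ ≤ ∑ _t : Fin ℓ, ((⌊ε * A.card⌋₊ : ℝ) * (A.card:ℝ)^(ℓ-1)) := by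
          apply Finset.sum_le_sum
          intro t _
          exact_mod_cast hfail t
      _ = (ℓ:ℝ) * ((⌊ε * A.card⌋₊ : ℝ) * (A.card:ℝ)^(ℓ-1)) := by
          rw [Finset.sum_const, Finset.card_univ, Fintype.card_fin, nsmul_eq_mul]
  calc (((Fintype.piFinset fun _ : Fin ℓ => A).filter fun a =>
        ((Y.filter fun y => ∀ t : Fin ℓ, y ∈ colNbhd c (col t) B (a t)).card : ℝ) <
          (∏ ν ∈ Finset.Icc 1 r, (colDensity c ν A B - ε) ^ k ν) * (Y.card : ℝ)).card : ℝ)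
      ≤ ((univ.biUnion fun t : Fin ℓ =>
          (Fintype.piFinset fun _ : Fin ℓ => A).filter (Fail t)).card : ℝ) := by
        exact_mod_cast Finset.card_le_card hsubset
    _ ≤ (ℓ:ℝ) * ((⌊ε * A.card⌋₊ : ℝ) * (A.card:ℝ)^(ℓ-1)) := hbiU
    _ ≤ (ℓ:ℝ) * ((ε * A.card) * (A.card:ℝ)^(ℓ-1)) := by
        apply mul_le_mul_of_nonneg_left _ (by positivity)
        apply mul_le_mul_of_nonneg_right (Nat.floor_le (by positivity)) (by positivity)
    _ = (ℓ:ℝ) * ε * ((A.card:ℝ) * (A.card:ℝ)^(ℓ-1)) := by ring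
    _ = (ℓ:ℝ) * ε * (A.card:ℝ)^ℓ := by
        congr 1
        rw [← pow_succ']
        congr 1
        omega
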